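/- Let N ≥ 1, p₁, p₂ ∈ ℂ, and let u, W : ℤ → ℤ → ZMod N → ℂ. Assume that for all n, m ∈ ℤ and h ∈ ZMod N the following three relations hold: (a) W (n+1) m h − W n (m+1) h = p₁·(u n m h − u (n+1) m h) − p₂·(u n m h − u n (m+1) h) + u n m h·(u n (m+1) h − u (n+1) m h); (b) W n (m+1) h − W n m (h+1) = p₂·(u n m h − u n (m+1) h) + u n m h·(u n m (h+1) − u n (m+1) h); (c) W n (m+1) h − W (n+1) m h = −p₁·(u n m h − u (n+1) m h) + u n m h·(u (n+1) m h − u n m (h+1)). Then u satisfies, for all n, m, h: (p₁ + u n (m+1) (h+1) − u (n+1) (m+1) h)·(p₂ + u n m (h+1) − u n (m+1) h) = (p₂ + u (n+1) m (h+1) − u (n+1) (m+1) h)·(p₁ + u n m (h+1) − u (n+1) m h). -/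
import Mathlib


theorem elimination_gives_quadrilateral (N : ℕ) (hN : 1 ≤ N) (p₁ p₂ : ℂ)
    (u W : ℤ → ℤ → ZMod N → ℂ)
    (ha : ∀ (n m : ℤ) (h : ZMod N),
      W (n+1) m h - W n (m+1) h
        = p₁ * (u n m h - u (n+1) m h) - p₂ * (u n m h - u n (m+1) h)
          + u n m h * (u n (m+1) h - u (n+1) m h))
    (hb : ∀ (n m : ℤ) (h : ZMod N),
      W n (m+1) h - W n m (h+1)
        = p₂ * (u n m h - u n (m+1) h) + u n m h * (u n m (h+1) - u n (m+1) h))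
    (hc : ∀ (n m : ℤ) (h : ZMod N),
      W n (m+1) h - W (n+1) m h
        = -p₁ * (u n m h - u (n+1) m h) + u n m h * (u (n+1) m h - u n m (h+1))) :
    ∀ (n m : ℤ) (h : ZMod N),
      (p₁ + u n (m+1) (h+1) - u (n+1) (m+1) h) * (p₂ + u n m (h+1) - u n (m+1) h)
        = (p₂ + u (n+1) m (h+1) - u (n+1) (m+1) h) * (p₁ + u n m (h+1) - u (n+1) m h) := by
  intro n m h
  linear_combination (ha n (m+1) h) + (hb n (m+1) h) + (hc n (m+1) h)
    - (ha n m (h+1)) - (hb (n+1) m h) - (hc n (m+1) h)
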